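/- Let U be an ultrafilter on D_0 = D(ℝ^d) containing every directing set D_n, and let *ℝ = Germ U ℝ be the field of germs of nets D_0 → ℝ modulo U. Then the germ ρ of the net φ ↦ R_φ satisfies 0 < ρ < r for every positive real number r (embedded as a constant germ); in particular ρ is a positive infinitesimal not equal to any real number, so the constant embedding ℝ → *ℝ is not surjective and ℝ is a proper subfield of *ℝ. -/

import Mathlib

open MeasureTheory Filter

noncomputable section

abbrev Rd (d : ℕ) := EuclideanSpace ℝ (Fin d)

noncomputable def pderivI (d : ℕ) (i : Fin d) (f : Rd d → ℂ) : Rd d → ℂ :=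
  fun x => fderiv ℝ f x (EuclideanSpace.single i (1 : ℝ))

noncomputable def multiDeriv (d : ℕ) (α : Fin d → ℕ) (f : Rd d → ℂ) : Rd d → ℂ :=
  ((List.ofFn fun i : Fin d => (pderivI d i)^[α i]).foldr (· ∘ ·) id) f

open Classical in
noncomputable def radSupp (d : ℕ) (φ : Rd d → ℂ) : ℝ :=
  if φ = 0 then 1 else sSup {r : ℝ | ∃ x, φ x ≠ 0 ∧ r = ‖x‖}

def TestFun (d : ℕ) := {φ : Rd d → ℂ // ContDiff ℝ (⊤ : ℕ∞) φ ∧ HasCompactSupport φ}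

def directingSet (d n : ℕ) : Set (TestFun d) :=
  {φ | (∀ x, (φ.1 x).im = 0) ∧
       (∀ x, φ.1 (-x) = φ.1 x) ∧
       radSupp d φ.1 ≤ 1 / n ∧
       (∫ x, φ.1 x) = 1 ∧
       (∀ α : Fin d → ℕ, 1 ≤ ∑ i, α i → ∑ i, α i ≤ n →
          (∫ x, (∏ i, (x i : ℂ) ^ α i) * φ.1 x) = 0) ∧
       (∫ x, ‖φ.1 x‖) ≤ 1 + 1 / n ∧
       (∀ α : Fin d → ℕ, ∑ i, α i ≤ n → ∀ x,
          ‖multiDeriv d α φ.1 x‖ ≤ radSupp d φ.1 ^ (-(2 * ((∑ i, α i) + d) : ℤ)))}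

end

lemma radSupp_pos (d : ℕ) (hd : 0 < d) (φ : TestFun d) : 0 < radSupp d φ.1 := by
  obtain ⟨f, hsm, hcs⟩ := φ
  simp only [radSupp]
  split_ifs with h
  · exact one_pos
  -- get a point x with f x ≠ 0 and ‖x‖ > 0
  obtain ⟨x₀, hx₀⟩ : ∃ x, f x ≠ 0 := by
    by_contra hc; push_neg at hc; exact h (funext hc)
  obtain ⟨x, hx, hxn⟩ : ∃ x, f x ≠ 0 ∧ 0 < ‖x‖ := by
    by_cases hx0 : x₀ = 0
    · have hcont : Continuous f := hsm.continuous
      have hopen : IsOpen {x : Rd d | f x ≠ 0} := isOpen_ne.preimage hcont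
      obtain ⟨ε, hε, hball⟩ := Metric.isOpen_iff.1 hopen x₀ hx₀
      set i : Fin d := ⟨0, hd⟩
      have hns : ‖(EuclideanSpace.single i (ε/2) : Rd d)‖ = ε/2 := by
        rw [EuclideanSpace.norm_single]; exact abs_of_pos (half_pos hε)
      refine ⟨x₀ + EuclideanSpace.single i (ε/2), hball ?_, ?_⟩
      · have : dist (x₀ + EuclideanSpace.single i (ε/2)) x₀ = ε/2 := by
          simp [dist_eq_norm, hns]
        rw [Metric.mem_ball, this]; linarith
      · subst hx0
        rw [zero_add, hns]; linarith
    · exact ⟨x₀, hx₀, norm_pos_iff.2 hx0⟩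
  have hbdd : BddAbove {r : ℝ | ∃ x, f x ≠ 0 ∧ r = ‖x‖} := by
    obtain ⟨C, hC⟩ := hcs.isCompact.isBounded.subset_closedBall 0
    refine ⟨C, fun r hr => ?_⟩
    obtain ⟨y, hy, rfl⟩ := hr
    have : y ∈ tsupport f := subset_tsupport f hy
    simpa [mem_closedBall_zero_iff] using hC this
  exact lt_of_lt_of_le hxn (le_csSup hbdd ⟨x, hx, rfl⟩)

lemma radSupp_small (d : ℕ) {n : ℕ} (hn : 1 ≤ n) {φ : TestFun d}
    (hφ : φ ∈ directingSet d n) : radSupp d φ.1 ≤ 1 / n := hφ.2.2.1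

theorem radSupp_germ_positive_infinitesimal
    (d : ℕ) (hd : 0 < d) (U : Ultrafilter (TestFun d))
    (hU : ∀ n : ℕ, 1 ≤ n → directingSet d n ∈ U) :
    (0 < (↑(fun φ : TestFun d => radSupp d φ.1) : Filter.Germ (U : Filter (TestFun d)) ℝ)) ∧
    (∀ r : ℝ, 0 < r →
      (↑(fun φ : TestFun d => radSupp d φ.1) : Filter.Germ (U : Filter (TestFun d)) ℝ)
        < (↑r : Filter.Germ (U : Filter (TestFun d)) ℝ)) ∧
    (∀ r : ℝ,
      (↑(fun φ : TestFun d => radSupp d φ.1) : Filter.Germ (U : Filter (TestFun d)) ℝ)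
        ≠ (↑r : Filter.Germ (U : Filter (TestFun d)) ℝ)) ∧
    ¬ Function.Surjective
        (fun r : ℝ => (↑r : Filter.Germ (U : Filter (TestFun d)) ℝ)) := by
  have hpos : 0 < (↑(fun φ : TestFun d => radSupp d φ.1) :
      Filter.Germ (U : Filter (TestFun d)) ℝ) :=
    Filter.Germ.coe_pos.2 (Eventually.of_forall fun φ => radSupp_pos d hd φ)
  have hlt : ∀ r : ℝ, 0 < r →
      (↑(fun φ : TestFun d => radSupp d φ.1) : Filter.Germ (U : Filter (TestFun d)) ℝ)
        < (↑r : Filter.Germ (U : Filter (TestFun d)) ℝ) := by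
    intro r hr
    obtain ⟨n, hn⟩ := exists_nat_one_div_lt hr
    refine Filter.Germ.coe_lt.2 ?_
    filter_upwards [hU (n+1) (Nat.le_add_left 1 n)] with φ hφ
    calc radSupp d φ.1 ≤ 1 / (n+1 : ℕ) := radSupp_small d (Nat.le_add_left 1 n) hφ
      _ = 1 / ((n : ℝ) + 1) := by push_cast; ring_nf
      _ < r := hn
  have hne : ∀ r : ℝ,
      (↑(fun φ : TestFun d => radSupp d φ.1) : Filter.Germ (U : Filter (TestFun d)) ℝ)
        ≠ (↑r : Filter.Germ (U : Filter (TestFun d)) ℝ) := by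
    intro r
    rcases lt_or_ge 0 r with h | h
    · exact ne_of_lt (hlt r h)
    · refine ne_of_gt ?_
      calc (↑r : Filter.Germ (U : Filter (TestFun d)) ℝ) ≤ ↑(0:ℝ) := by
            exact_mod_cast h
        _ = 0 := by norm_cast
        _ < _ := hpos
  refine ⟨hpos, hlt, hne, fun hs => ?_⟩
  obtain ⟨r, hr⟩ := hs (↑(fun φ : TestFun d => radSupp d φ.1))
  exact hne r hr.symm
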